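/- The length of the curve t ↦ (t, dist(t, S)) for t ∈ [1,2], where S = {1 + i·2^{−N} : i = 0, 1, …, 2^N} for a positive integer N, equals √2. -/

import Mathlib

open Set Metric
open scoped ENNReal NNReal

noncomputable section

def Sset (N : ℕ) : Set ℝ := {s : ℝ | ∃ i : ℕ, i ≤ 2 ^ N ∧ s = 1 + (i : ℝ) * (2:ℝ) ^ (-(N:ℤ))}

lemma hpos (N : ℕ) : (0:ℝ) < (2:ℝ) ^ (-(N+1:ℤ)) := by positivity

lemma delta_eq (N : ℕ) : (2:ℝ) ^ (-(N:ℤ)) = 2 * (2:ℝ) ^ (-(N+1:ℤ)) := by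
  rw [show (-(N:ℤ)) = 1 + (-(N+1:ℤ)) by ring, zpow_add₀ (by norm_num : (2:ℝ) ≠ 0)]
  norm_num

lemma Sset_nonempty (N : ℕ) : (Sset N).Nonempty :=
  ⟨1 + 0 * (2:ℝ) ^ (-(N:ℤ)), ⟨0, by simp⟩⟩

lemma infDist_even (N i : ℕ) (hi : i ≤ 2 ^ N) :
    Metric.infDist (1 + (i:ℝ) * (2:ℝ) ^ (-(N:ℤ))) (Sset N) = 0 :=
  infDist_zero_of_mem ⟨i, hi, rfl⟩

lemma infDist_odd (N i : ℕ) (hi : i < 2 ^ N) :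
    Metric.infDist (1 + (i:ℝ) * (2:ℝ) ^ (-(N:ℤ)) + (2:ℝ) ^ (-(N+1:ℤ))) (Sset N)
      = (2:ℝ) ^ (-(N+1:ℤ)) := by
  set h : ℝ := (2:ℝ) ^ (-(N+1:ℤ)) with hh
  have hp : 0 < h := hpos N
  have hd : (2:ℝ) ^ (-(N:ℤ)) = 2 * h := delta_eq N
  apply le_antisymm
  · calc Metric.infDist (1 + (i:ℝ) * (2:ℝ) ^ (-(N:ℤ)) + h) (Sset N)
        ≤ dist (1 + (i:ℝ) * (2:ℝ) ^ (-(N:ℤ)) + h) (1 + (i:ℝ) * (2:ℝ) ^ (-(N:ℤ))) :=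
          infDist_le_dist_of_mem ⟨i, hi.le, rfl⟩
      _ = h := by rw [Real.dist_eq]; rw [abs_of_nonneg] <;> linarith
  · by_contra hlt
    push_neg at hlt
    obtain ⟨y, ⟨k, _, rfl⟩, hy⟩ := (infDist_lt_iff (Sset_nonempty N)).mp hlt
    rw [Real.dist_eq] at hy
    rcases le_or_gt k i with hk | hk
    · have : (k:ℝ) ≤ i := by exact_mod_cast hk
      rw [abs_of_nonneg (by nlinarith)] at hy
      nlinarith
    · have : (i:ℝ) + 1 ≤ k := by exact_mod_cast hk
      rw [abs_of_nonpos (by nlinarith)] at hy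
      nlinarith

/-- the infDist at grid points of step h -/
lemma infDist_at (N j : ℕ) (hj : j ≤ 2 ^ (N+1)) :
    Metric.infDist (1 + (j:ℝ) * (2:ℝ) ^ (-(N+1:ℤ))) (Sset N)
      = if Even j then 0 else (2:ℝ) ^ (-(N+1:ℤ)) := by
  rcases Nat.even_or_odd j with he | ho
  · obtain ⟨i, rfl⟩ := he
    have hi : i ≤ 2 ^ N := by omega
    rw [if_pos (by exact ⟨i, rfl⟩)]
    have : (1:ℝ) + (↑(i + i)) * (2:ℝ) ^ (-(N+1:ℤ)) = 1 + (i:ℝ) * (2:ℝ) ^ (-(N:ℤ)) := by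
      push_cast; rw [delta_eq N]; ring
    rw [this]; exact infDist_even N i hi
  · obtain ⟨i, rfl⟩ := ho
    have hi : i < 2 ^ N := by
      have := Nat.pow_succ 2 N ▸ hj; omega
    rw [if_neg (by simp [Nat.even_add_one, Nat.even_iff, Nat.odd_iff])]
    have : (1:ℝ) + (↑(2*i + 1)) * (2:ℝ) ^ (-(N+1:ℤ))
        = 1 + (i:ℝ) * (2:ℝ) ^ (-(N:ℤ)) + (2:ℝ) ^ (-(N+1:ℤ)) := by
      push_cast; rw [delta_eq N]; ring
    rw [this]; exact infDist_odd N i hi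

lemma dist_F (N : ℕ) (s t : ℝ) :
    dist ((WithLp.equiv 2 (Fin 2 → ℝ)).symm ![s, Metric.infDist s (Sset N)])
      ((WithLp.equiv 2 (Fin 2 → ℝ)).symm ![t, Metric.infDist t (Sset N)])
    = Real.sqrt ((s - t)^2 + (Metric.infDist s (Sset N) - Metric.infDist t (Sset N))^2) := by
  rw [EuclideanSpace.dist_eq]
  simp [Fin.sum_univ_two, Real.dist_eq, sq_abs]

theorem stmt_16 (N : ℕ) (hN : 1 ≤ N) :
    eVariationOn
      (fun t : ℝ => (WithLp.equiv 2 (Fin 2 → ℝ)).symm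
        ![t, Metric.infDist t {s : ℝ | ∃ i : ℕ, i ≤ 2 ^ N ∧ s = 1 + (i : ℝ) * (2:ℝ) ^ (-(N:ℤ))}])
      (Set.Icc (1:ℝ) 2) = ENNReal.ofReal (Real.sqrt 2) := by
  have hSet : {s : ℝ | ∃ i : ℕ, i ≤ 2 ^ N ∧ s = 1 + (i : ℝ) * (2:ℝ) ^ (-(N:ℤ))} = Sset N := rfl
  rw [hSet]
  set F : ℝ → EuclideanSpace ℝ (Fin 2) := fun t =>
    (WithLp.equiv 2 (Fin 2 → ℝ)).symm ![t, Metric.infDist t (Sset N)] with hF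
  set h : ℝ := (2:ℝ) ^ (-(N+1:ℤ)) with hh
  have hp : 0 < h := hpos N
  apply le_antisymm
  · -- upper bound: F is √2-Lipschitz
    have hlip : LipschitzWith (NNReal.sqrt 2) F := by
      apply LipschitzWith.of_dist_le_mul
      intro s t
      rw [hF]
      rw [dist_F N s t]
      have h1 : |Metric.infDist s (Sset N) - Metric.infDist t (Sset N)| ≤ |s - t| := by
        have := (lipschitz_infDist_pt (Sset N)).dist_le_mul s t
        simpa [Real.dist_eq] using this
      have h2 : (Metric.infDist s (Sset N) - Metric.infDist t (Sset N))^2 ≤ (s-t)^2 := by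
        rw [← sq_abs, ← sq_abs (s-t)]; exact pow_le_pow_left₀ (abs_nonneg _) h1 2
      calc Real.sqrt ((s - t)^2 + (Metric.infDist s (Sset N) - Metric.infDist t (Sset N))^2)
          ≤ Real.sqrt (2 * (s-t)^2) := Real.sqrt_le_sqrt (by linarith)
        _ = Real.sqrt 2 * |s - t| := by
            rw [Real.sqrt_mul (by norm_num), Real.sqrt_sq_eq_abs]
        _ = (NNReal.sqrt 2 : ℝ) * dist s t := by
            rw [Real.dist_eq]; norm_num [Real.coe_sqrt]
    have := hlip.lipschitzOnWith (s := Set.Icc (1:ℝ) 2)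
    have hcomp : eVariationOn (F ∘ id) (Set.Icc (1:ℝ) 2)
        ≤ (NNReal.sqrt 2 : ℝ≥0∞) * eVariationOn id (Set.Icc (1:ℝ) 2) :=
      LipschitzOnWith.comp_eVariationOn_le this (Set.mapsTo_id _)
    have hid : eVariationOn (id : ℝ → ℝ) (Set.Icc (1:ℝ) 2) ≤ ENNReal.ofReal 1 := by
      have hm : MonotoneOn (id : ℝ → ℝ) (Set.Icc (1:ℝ) 2) := fun _ _ _ _ h => h
      have := hm.eVariationOn_le (a := 1) (b := 2) (by norm_num) (by norm_num)
      simp only [Set.inter_self, id] at this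
      convert this using 2
      norm_num
    calc eVariationOn F (Set.Icc (1:ℝ) 2) = eVariationOn (F ∘ id) (Set.Icc (1:ℝ) 2) := rfl
      _ ≤ (NNReal.sqrt 2 : ℝ≥0∞) * eVariationOn id (Set.Icc (1:ℝ) 2) := hcomp
      _ ≤ (NNReal.sqrt 2 : ℝ≥0∞) * ENNReal.ofReal 1 := by gcongr
      _ = ENNReal.ofReal (Real.sqrt 2) := by
          rw [ENNReal.ofReal_one, mul_one, ← ENNReal.ofReal_coe_nnreal, Real.coe_sqrt]
          norm_num
  · -- lower bound via partition
    set n : ℕ := 2 ^ (N+1) with hn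
    set u : ℕ → ℝ := fun j => 1 + (j : ℝ) * h with hu
    have hnh : (n:ℝ) * h = 1 := by
      have hcast : ((n:ℕ):ℝ) = (2:ℝ) ^ ((N:ℤ)+1) := by
        rw [hn, show ((N:ℤ)+1 : ℤ) = ((N+1 : ℕ) : ℤ) by push_cast; ring, zpow_natCast]
        push_cast; ring
      rw [hcast, hh, show (-((N:ℤ)+1)) = -((N:ℤ)+1) by ring, ← zpow_add₀ (by norm_num : (2:ℝ) ≠ 0),
        add_neg_cancel, zpow_zero]
    have hmono : MonotoneOn u (Set.Iic n) := by
      intro a _ b _ hab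
      simp only [hu]
      have : (a:ℝ) ≤ b := by exact_mod_cast hab
      nlinarith
    have hus : ∀ i ≤ n, u i ∈ Set.Icc (1:ℝ) 2 := by
      intro i hi
      have hi' : (i:ℝ) ≤ n := by exact_mod_cast hi
      simp only [hu, Set.mem_Icc]
      constructor
      · nlinarith [hp.le, Nat.cast_nonneg (α := ℝ) i]
      · nlinarith [hp.le, Nat.cast_nonneg (α := ℝ) i]
    have key := eVariationOn.sum_le_of_monotoneOn_Iic (f := F) hmono hus
    have hterm : ∀ i < n, edist (F (u (i+1))) (F (u i)) = ENNReal.ofReal (Real.sqrt 2 * h) := by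
      intro i hi
      rw [edist_dist, hF, dist_F N]
      have d1 := infDist_at N i (by omega)
      have d2 := infDist_at N (i+1) (by omega)
      have hdiff : (Metric.infDist (u (i+1)) (Sset N) - Metric.infDist (u i) (Sset N))^2 = h^2 := by
        simp only [hu]
        rw [d1, d2]
        rcases Nat.even_or_odd i with he | ho
        · rw [if_pos he, if_neg (by simp [Nat.even_add_one, he])]
          ring
        · rw [if_neg (Nat.not_even_iff_odd.mpr ho),
            if_pos (Nat.even_add_one.mpr (Nat.not_even_iff_odd.mpr ho))]
          ring
      have hfst : (u (i+1) - u i)^2 = h^2 := by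
        simp only [hu]; push_cast; ring
      rw [hdiff, hfst]
      congr 1
      rw [show h^2 + h^2 = 2 * h^2 by ring, Real.sqrt_mul (by norm_num), Real.sqrt_sq hp.le]
    have hsum : (∑ i ∈ Finset.range n, edist (F (u (i+1))) (F (u i)))
        = n * ENNReal.ofReal (Real.sqrt 2 * h) := by
      rw [Finset.sum_congr rfl (fun i hi => hterm i (Finset.mem_range.mp hi))]
      simp [mul_comm]
    rw [hsum] at key
    have : (n : ℝ≥0∞) * ENNReal.ofReal (Real.sqrt 2 * h) = ENNReal.ofReal (Real.sqrt 2) := by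
      rw [show (n : ℝ≥0∞) = ENNReal.ofReal (n : ℝ) by simp,
        ← ENNReal.ofReal_mul (by positivity)]
      rw [show (n:ℝ) * (Real.sqrt 2 * h) = Real.sqrt 2 * ((n:ℝ) * h) by ring, hnh, mul_one]
    rwa [this] at key
end
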